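/- Let S = 1 + 48/π + 288/π² + (4/π)(1 + 12/π)√(6π + 36), and let a, b be integers with |a| < (|b| − S)/√S. Then with A = |b|, M = |a|, one has 0 < M < A − 1, and the quantity η = s + (8s/(π(1−s)))·3 with s = ((2A + M² − M√(M²+4A))/2)^(−1/2) satisfies η < 1. -/

import Mathlib

open Real

lemma sq_rpow_neg_half' {y : ℝ} (hy : 0 < y) : (y^2) ^ (-(1/2) : ℝ) = y⁻¹ := by
  rw [← Real.rpow_natCast y 2, ← Real.rpow_mul hy.le]
  norm_num
  exact Real.rpow_neg_one y

set_option maxHeartbeats 1000000 in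
/-- Verification of hypotheses (H3) and (H5) for the piecewise linear example:
if |a| < (|b| − S)/√S (and a ≠ 0), then with A = |b|, M = |a| one has
0 < M < A − 1 and η = s + (8s/(π(1−s)))·3 < 1. -/
theorem stmt_18 (S : ℝ)
    (hS : S = 1 + 48/π + 288/π^2 + (4/π) * (1 + 12/π) * Real.sqrt (6*π + 36))
    (a b : ℤ) (ha : a ≠ 0)
    (hab : (|a| : ℝ) < ((|b| : ℝ) - S) / Real.sqrt S)
    (A M s : ℝ) (hA : A = (|b| : ℝ)) (hM : M = (|a| : ℝ))
    (hs : s = ((2*A + M^2 - M * Real.sqrt (M^2 + 4*A)) / 2) ^ (-(1/2) : ℝ)) :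
    0 < M ∧ M < A - 1 ∧ s + 8 * s / (π * (1 - s)) * 3 < 1 := by
  have hπ : (0:ℝ) < π := Real.pi_pos
  -- the auxiliary square root w = √(6π+36)
  set w := Real.sqrt (6*π + 36) with hwdef
  have hw2 : w^2 = 6*π + 36 := Real.sq_sqrt (by nlinarith)
  have hwpos : 0 < w := Real.sqrt_pos.mpr (by nlinarith)
  have hSsqrt : Real.sqrt S = (π + 12 + 2*w)/π := by
    have h : S = ((π + 12 + 2*w)/π)^2 := by
      rw [hS]; field_simp; ring_nf; linear_combination (-4)*hw2
    rw [h, Real.sqrt_sq (by positivity)]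
  have hsqSpos : 0 < Real.sqrt S := by rw [hSsqrt]; positivity
  have hsqS1 : 1 < Real.sqrt S := by
    rw [hSsqrt, lt_div_iff₀ hπ]; nlinarith
  have hSpos : 0 < S := by rw [hS]; positivity
  have hS1 : 1 < S := by nlinarith [Real.mul_self_sqrt hSpos.le, hsqS1]
  -- M ≥ 1
  have hM1 : (1:ℝ) ≤ M := by
    rw [hM]
    have : (1:ℤ) ≤ |a| := Int.one_le_abs (by simpa using ha)
    exact_mod_cast this
  have hMpos : 0 < M := lt_of_lt_of_le one_pos hM1
  -- A > S + M √S
  have hAS : S + M * Real.sqrt S < A := by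
    have h := hab
    rw [lt_div_iff₀ hsqSpos] at h
    rw [hA, ← hM] at *
    nlinarith [h]
  have hApos : 0 < A := by nlinarith [mul_pos hMpos hsqSpos]
  have hMA : M < A - 1 := by nlinarith [mul_lt_mul_of_pos_left hsqS1 hMpos]
  refine ⟨hMpos, hMA, ?_⟩
  -- t = √(M²+4A)
  set t := Real.sqrt (M^2 + 4*A) with htdef
  have ht2 : t^2 = M^2 + 4*A := Real.sq_sqrt (by positivity)
  have htM : M < t := by
    have h : M = Real.sqrt (M^2) := by rw [Real.sqrt_sq hMpos.le]
    rw [h]; exact Real.sqrt_lt_sqrt (by positivity) (by nlinarith)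
  have hyd : 0 < (t - M)/2 := by linarith
  -- s = 2/(t-M)
  have hsval : s = ((t - M)/2)⁻¹ := by
    rw [hs]
    have hbase : (2*A + M^2 - M * t) / 2 = ((t - M)/2)^2 := by linear_combination (-(1:ℝ)/4)*ht2
    rw [hbase]
    exact sq_rpow_neg_half' hyd
  have hspos : 0 < s := by rw [hsval]; positivity
  -- key quadratic identity : A s² = M s + 1
  have hkey : A * s^2 = M * s + 1 := by
    rw [hsval]
    have htM' : t - M ≠ 0 := by linarith
    field_simp
    linear_combination (-1:ℝ)*ht2
  -- s < 1/√S
  set u := (Real.sqrt S)⁻¹ with hudef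
  have hupos : 0 < u := by positivity
  have hu1 : u < 1 := by rw [hudef]; exact inv_lt_one_of_one_lt₀ hsqS1
  have hSS : Real.sqrt S * Real.sqrt S = S := Real.mul_self_sqrt hSpos.le
  have hfu : A * u^2 - M * u - 1 > 0 := by
    have h : (A * u^2 - M * u - 1) * S = (A - M * Real.sqrt S - S) := by
      rw [hudef]; field_simp; linear_combination (M * Real.sqrt S - A)*hSS
    by_contra hcon
    push_neg at hcon
    have h2 : (A * u^2 - M * u - 1) * S ≤ 0 :=
      mul_nonpos_iff.mpr (Or.inr ⟨hcon, hSpos.le⟩)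
    rw [h] at h2
    linarith
  have hAsM : M < A * s := by nlinarith [hkey, hspos]
  have hsu : s < u := by
    by_contra hcon
    push_neg at hcon
    nlinarith [mul_nonneg (sub_nonneg.mpr hcon) (sub_pos.mpr hAsM).le, hkey, hfu,
      mul_pos hApos hupos]
  have hs1 : s < 1 := lt_trans hsu hu1
  -- g(u) = 0 where g(x) = πx² - (2π+24)x + π
  have huval : u = π / (π + 12 + 2*w) := by
    rw [hudef, hSsqrt]; field_simp
  have hgu : π * u^2 - (2*π + 24) * u + π = 0 := by
    have hd : (0:ℝ) < π + 12 + 2*w := by positivity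
    rw [huval]
    field_simp
    linear_combination (4*π)*hw2
  have hgs : 0 < π * s^2 - (2*π + 24) * s + π := by
    nlinarith [mul_pos (sub_pos.mpr hsu) (show (0:ℝ) < 2*π + 24 - π * (s + u) by nlinarith)]
  -- conclude
  have h1s : 0 < 1 - s := by linarith
  have hden : 0 < π * (1 - s) := mul_pos hπ h1s
  have h24 : 24 * s < π * (1 - s)^2 := by nlinarith [hgs]
  have hfrac : 8 * s / (π * (1 - s)) * 3 < 1 - s := by
    rw [div_mul_eq_mul_div, div_lt_iff₀ hden]
    nlinarith
  linarith
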